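/- Vertical composition of 2-tracks is well defined: let g, g', h, h' be 2-paths in M with g(1,·) = h(0,·) and g'(1,·) = h'(0,·); if A is a rank-2 homotopy from g to g', B is a rank-2 homotopy from h to h', and A(r,1,·) = B(r,0,·) for all r ∈ ℝ, then the vertical composition g·h is rank-2 homotopic to g'·h'. -/

import Mathlib

open scoped Manifold

variable (E : Type*) [NormedAddCommGroup E] [NormedSpace ℝ E] [FiniteDimensional ℝ E]
variable {M : Type*} [TopologicalSpace M] [ChartedSpace E M]
  [IsManifold 𝓘(ℝ, E) ((⊤ : ℕ∞) : WithTop ℕ∞) M]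

/-- A 1-path in `M`: a smooth map `ℝ → M` that is constant near `(-∞, 0]` and near
`[1, ∞)` (in the sense of the `ε`-conditions). -/
def IsOnePath (γ : ℝ → M) : Prop :=
  ContMDiff 𝓘(ℝ, ℝ) 𝓘(ℝ, E) (⊤ : ℕ∞) γ ∧
    ∃ ε > (0 : ℝ), (∀ t ≤ ε, γ t = γ 0) ∧ (∀ t, 1 - ε ≤ t → γ t = γ 1)

/-- A 2-path in `M`, as a smooth map `ℝ × ℝ → M` with coordinates `(s, t)`,
constant near the boundary in each variable, whose images at `t = 0` and `t = 1`
are single points. -/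
def IsTwoPath (g : ℝ × ℝ → M) : Prop :=
  ContMDiff 𝓘(ℝ, ℝ × ℝ) 𝓘(ℝ, E) (⊤ : ℕ∞) g ∧
    (∃ ε > (0 : ℝ),
      (∀ s t, s ≤ ε → g (s, t) = g (0, t)) ∧
      (∀ s t, 1 - ε ≤ s → g (s, t) = g (1, t)) ∧
      (∀ s t, t ≤ ε → g (s, t) = g (s, 0)) ∧
      (∀ s t, 1 - ε ≤ t → g (s, t) = g (s, 1))) ∧
    (∀ s s', g (s, 0) = g (s', 0)) ∧ (∀ s s', g (s, 1) = g (s', 1))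

/-- A rank-1 homotopy: a 2-path whose differential has rank at most 1 at every point. -/
def IsRank1Homotopy (h : ℝ × ℝ → M) : Prop :=
  IsTwoPath E h ∧
    ∀ p : ℝ × ℝ,
      Module.finrank ℝ
        (LinearMap.range (mfderiv 𝓘(ℝ, ℝ × ℝ) 𝓘(ℝ, E) h p).toLinearMap) ≤ 1

/-- Two 1-paths are rank-1 homotopic if they are joined by a rank-1 homotopy. -/
def Rank1Homotopic (γ γ' : ℝ → M) : Prop :=
  ∃ h : ℝ × ℝ → M, IsRank1Homotopy E h ∧ (∀ t, h (0, t) = γ t) ∧ (∀ t, h (1, t) = γ' t)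

/-- A 3-path in `M`, as a smooth map `ℝ × ℝ × ℝ → M` with coordinates `(r, s, t)`. -/
def IsThreePath (α : ℝ × ℝ × ℝ → M) : Prop :=
  ContMDiff 𝓘(ℝ, ℝ × ℝ × ℝ) 𝓘(ℝ, E) (⊤ : ℕ∞) α ∧
    (∃ ε > (0 : ℝ),
      (∀ r s t, r ≤ ε → α (r, s, t) = α (0, s, t)) ∧
      (∀ r s t, 1 - ε ≤ r → α (r, s, t) = α (1, s, t)) ∧
      (∀ r s t, s ≤ ε → α (r, s, t) = α (r, 0, t)) ∧
      (∀ r s t, 1 - ε ≤ s → α (r, s, t) = α (r, 1, t)) ∧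
      (∀ r s t, t ≤ ε → α (r, s, t) = α (r, s, 0)) ∧
      (∀ r s t, 1 - ε ≤ t → α (r, s, t) = α (r, s, 1))) ∧
    (∀ r s r' s', α (r, s, 0) = α (r', s', 0)) ∧
    (∀ r s r' s', α (r, s, 1) = α (r', s', 1))

/-- A rank-2 homotopy: a 3-path whose differential has rank at most 2 at every point and
whose restrictions to `s = 0` and `s = 1` are rank-1 homotopies. -/
def IsRank2Homotopy (α : ℝ × ℝ × ℝ → M) : Prop :=
  IsThreePath E α ∧
    (∀ p : ℝ × ℝ × ℝ,
      Module.finrank ℝ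
        (LinearMap.range (mfderiv 𝓘(ℝ, ℝ × ℝ × ℝ) 𝓘(ℝ, E) α p).toLinearMap) ≤ 2) ∧
    IsRank1Homotopy E (fun p : ℝ × ℝ => α (p.1, 0, p.2)) ∧
    IsRank1Homotopy E (fun p : ℝ × ℝ => α (p.1, 1, p.2))

/-- `α` is a rank-2 homotopy from the 2-path `g` to the 2-path `g'`. -/
def Rank2HomotopyFrom (α : ℝ × ℝ × ℝ → M) (g g' : ℝ × ℝ → M) : Prop :=
  IsRank2Homotopy E α ∧ (∀ s t, α (0, s, t) = g (s, t)) ∧ (∀ s t, α (1, s, t) = g' (s, t))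

/-- Two 2-paths are rank-2 homotopic if they are joined by a rank-2 homotopy. -/
def Rank2Homotopic (g g' : ℝ × ℝ → M) : Prop :=
  ∃ α : ℝ × ℝ × ℝ → M, Rank2HomotopyFrom E α g g'

/-- Vertical composition of 2-paths. -/
noncomputable def vertComp (g h : ℝ × ℝ → M) : ℝ × ℝ → M := fun p =>
  if p.1 ≤ 1 / 2 then g (2 * p.1, p.2) else h (2 * p.1 - 1, p.2)

/-- Vertical composition of 2-tracks is well defined: if `A` is a rank-2 homotopy from
`g` to `g'`, `B` is a rank-2 homotopy from `h` to `h'`, and `A (r, 1, ·) = B (r, 0, ·)`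
for all `r`, then `g · h` is rank-2 homotopic to `g' · h'`. -/
theorem vertComp_rank2Homotopic (g g' h h' : ℝ × ℝ → M) (A B : ℝ × ℝ × ℝ → M)
    (hg : IsTwoPath E g) (hg' : IsTwoPath E g') (hh : IsTwoPath E h) (hh' : IsTwoPath E h')
    (hgh : ∀ t, g (1, t) = h (0, t)) (hgh' : ∀ t, g' (1, t) = h' (0, t))
    (hA : Rank2HomotopyFrom E A g g') (hB : Rank2HomotopyFrom E B h h')
    (hAB : ∀ r t, A (r, 1, t) = B (r, 0, t)) :
    Rank2Homotopic E (vertComp g h) (vertComp g' h') := by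
  classical
  obtain ⟨⟨⟨hAsm, ⟨εA, hεA, hA1, hA2, hA3, hA4, hA5, hA6⟩, hA0pt, hA1pt⟩,
    hArank, hAr10, hAr11⟩, hA0, hA1'⟩ := hA
  obtain ⟨⟨⟨hBsm, ⟨εB, hεB, hB1, hB2, hB3, hB4, hB5, hB6⟩, hB0pt, hB1pt⟩,
    hBrank, hBr10, hBr11⟩, hB0, hB1'⟩ := hB
  set ε : ℝ := min (min εA εB) (1 / 2) with hεdef
  have hεpos : 0 < ε := lt_min (lt_min hεA hεB) (by norm_num)
  have hεsA : ε ≤ εA := le_trans (min_le_left _ _) (min_le_left _ _)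
  have hεsB : ε ≤ εB := le_trans (min_le_left _ _) (min_le_right _ _)
  have hεhalf : ε ≤ 1 / 2 := min_le_right _ _
  set C : ℝ × ℝ × ℝ → M := fun p =>
    if p.2.1 ≤ 1 / 2 then A (p.1, 2 * p.2.1, p.2.2) else B (p.1, 2 * p.2.1 - 1, p.2.2)
    with hCdef
  set LA : ℝ × ℝ × ℝ → ℝ × ℝ × ℝ := fun p => (p.1, 2 * p.2.1, p.2.2) with hLAdef
  set LB : ℝ × ℝ × ℝ → ℝ × ℝ × ℝ := fun p => (p.1, 2 * p.2.1 - 1, p.2.2) with hLBdef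
  have hLAsm : ContMDiff 𝓘(ℝ, ℝ × ℝ × ℝ) 𝓘(ℝ, ℝ × ℝ × ℝ) (⊤ : ℕ∞) LA :=
    contMDiff_iff_contDiff.2 (by fun_prop)
  have hLBsm : ContMDiff 𝓘(ℝ, ℝ × ℝ × ℝ) 𝓘(ℝ, ℝ × ℝ × ℝ) (⊤ : ℕ∞) LB :=
    contMDiff_iff_contDiff.2 (by fun_prop)
  -- local descriptions of C
  have hU : ∀ p : ℝ × ℝ × ℝ, p.2.1 < 1 / 2 + ε / 2 → C p = (A ∘ LA) p := by
    rintro ⟨r, s, t⟩ hp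
    simp only at hp
    by_cases hs : s ≤ 1 / 2
    · simp only [hCdef, hLAdef, Function.comp, if_pos hs]
    · push_neg at hs
      have h1 : A (r, 2 * s, t) = A (r, 1, t) := hA4 r (2 * s) t (by linarith)
      have h2 : B (r, 2 * s - 1, t) = B (r, 0, t) := hB3 r (2 * s - 1) t (by linarith)
      simp only [hCdef, hLAdef, Function.comp, if_neg (not_le.2 hs)]
      rw [h2, h1, hAB]
  have hV : ∀ p : ℝ × ℝ × ℝ, 1 / 2 - ε / 2 < p.2.1 → C p = (B ∘ LB) p := by
    rintro ⟨r, s, t⟩ hp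
    simp only at hp
    by_cases hs : s ≤ 1 / 2
    · have h1 : A (r, 2 * s, t) = A (r, 1, t) := hA4 r (2 * s) t (by linarith)
      have h2 : B (r, 2 * s - 1, t) = B (r, 0, t) := hB3 r (2 * s - 1) t (by linarith)
      simp only [hCdef, hLBdef, Function.comp, if_pos hs]
      rw [h2, h1, hAB]
    · simp only [hCdef, hLBdef, Function.comp, if_neg hs]
  have hUopen : IsOpen {q : ℝ × ℝ × ℝ | q.2.1 < 1 / 2 + ε / 2} :=
    isOpen_lt (by fun_prop) continuous_const
  have hVopen : IsOpen {q : ℝ × ℝ × ℝ | 1 / 2 - ε / 2 < q.2.1} :=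
    isOpen_lt continuous_const (by fun_prop)
  have hUev : ∀ p : ℝ × ℝ × ℝ, p.2.1 < 1 / 2 + ε / 2 → C =ᶠ[nhds p] (A ∘ LA) := fun p hp =>
    Filter.eventuallyEq_of_mem (hUopen.mem_nhds hp) (fun q hq => hU q hq)
  have hVev : ∀ p : ℝ × ℝ × ℝ, 1 / 2 - ε / 2 < p.2.1 → C =ᶠ[nhds p] (B ∘ LB) := fun p hp =>
    Filter.eventuallyEq_of_mem (hVopen.mem_nhds hp) (fun q hq => hV q hq)
  -- smoothness
  have hCsm : ContMDiff 𝓘(ℝ, ℝ × ℝ × ℝ) 𝓘(ℝ, E) (⊤ : ℕ∞) C := by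
    intro p
    rcases lt_or_ge p.2.1 (1 / 2 + ε / 2) with hp | hp
    · exact ((hAsm.comp hLAsm) p).congr_of_eventuallyEq (hUev p hp)
    · exact ((hBsm.comp hLBsm) p).congr_of_eventuallyEq
        (hVev p (by linarith))
  -- rank
  have hCrank : ∀ p : ℝ × ℝ × ℝ,
      Module.finrank ℝ
        (LinearMap.range (mfderiv 𝓘(ℝ, ℝ × ℝ × ℝ) 𝓘(ℝ, E) C p).toLinearMap) ≤ 2 := by
    intro p
    rcases lt_or_ge p.2.1 (1 / 2 + ε / 2) with hp | hp
    · have hle : LinearMap.range (mfderiv 𝓘(ℝ, ℝ × ℝ × ℝ) 𝓘(ℝ, E) C p).toLinearMap ≤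
          LinearMap.range (mfderiv 𝓘(ℝ, ℝ × ℝ × ℝ) 𝓘(ℝ, E) A (LA p)).toLinearMap := by
        rw [(hUev p hp).mfderiv_eq,
          mfderiv_comp p (hAsm.mdifferentiableAt (by simp)) (hLAsm.mdifferentiableAt (by simp))]
        rintro x ⟨y, rfl⟩
        exact ⟨_, rfl⟩
      haveI : FiniteDimensional ℝ (TangentSpace 𝓘(ℝ, ℝ × ℝ × ℝ) (LA p)) :=
        inferInstanceAs (FiniteDimensional ℝ (ℝ × ℝ × ℝ))
      haveI hfinA : FiniteDimensional ℝ
          (LinearMap.range (mfderiv 𝓘(ℝ, ℝ × ℝ × ℝ) 𝓘(ℝ, E) A (LA p)).toLinearMap) :=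
        LinearMap.finiteDimensional_range _
      exact le_trans (@Submodule.finrank_mono _ _ _ _ _ _ _ _ hfinA hle) (hArank (LA p))
    · have hle : LinearMap.range (mfderiv 𝓘(ℝ, ℝ × ℝ × ℝ) 𝓘(ℝ, E) C p).toLinearMap ≤
          LinearMap.range (mfderiv 𝓘(ℝ, ℝ × ℝ × ℝ) 𝓘(ℝ, E) B (LB p)).toLinearMap := by
        rw [(hVev p (by linarith)).mfderiv_eq,
          mfderiv_comp p (hBsm.mdifferentiableAt (by simp)) (hLBsm.mdifferentiableAt (by simp))]
        rintro x ⟨y, rfl⟩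
        exact ⟨_, rfl⟩
      haveI : FiniteDimensional ℝ (TangentSpace 𝓘(ℝ, ℝ × ℝ × ℝ) (LB p)) :=
        inferInstanceAs (FiniteDimensional ℝ (ℝ × ℝ × ℝ))
      haveI hfinB : FiniteDimensional ℝ
          (LinearMap.range (mfderiv 𝓘(ℝ, ℝ × ℝ × ℝ) 𝓘(ℝ, E) B (LB p)).toLinearMap) :=
        LinearMap.finiteDimensional_range _
      exact le_trans (@Submodule.finrank_mono _ _ _ _ _ _ _ _ hfinB hle) (hBrank (LB p))
  -- restrictions at s = 0 and s = 1
  have hCres0 : (fun p : ℝ × ℝ => C (p.1, 0, p.2)) = fun p : ℝ × ℝ => A (p.1, 0, p.2) := by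
    funext p
    have : ((0 : ℝ) ≤ 1 / 2) := by norm_num
    simp only [hCdef, if_pos this]
    norm_num
  have hCres1 : (fun p : ℝ × ℝ => C (p.1, 1, p.2)) = fun p : ℝ × ℝ => B (p.1, 1, p.2) := by
    funext p
    have : ¬ ((1 : ℝ) ≤ 1 / 2) := by norm_num
    simp only [hCdef, if_neg this]
    norm_num
  refine ⟨C, ⟨⟨⟨hCsm, ⟨ε / 2, half_pos hεpos, ?_, ?_, ?_, ?_, ?_, ?_⟩, ?_, ?_⟩,
    hCrank, ?_, ?_⟩, ?_, ?_⟩⟩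
  · -- r ≤ ε/2
    intro r s t hr
    by_cases hs : s ≤ 1 / 2
    · simp only [hCdef, if_pos hs]; exact hA1 r (2 * s) t (by linarith)
    · simp only [hCdef, if_neg hs]; exact hB1 r (2 * s - 1) t (by linarith)
  · -- 1 - ε/2 ≤ r
    intro r s t hr
    by_cases hs : s ≤ 1 / 2
    · simp only [hCdef, if_pos hs]; exact hA2 r (2 * s) t (by linarith)
    · simp only [hCdef, if_neg hs]; exact hB2 r (2 * s - 1) t (by linarith)
  · -- s ≤ ε/2
    intro r s t hs
    have hs2 : s ≤ 1 / 2 := by linarith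
    have h0 : ((0 : ℝ) ≤ 1 / 2) := by norm_num
    simp only [hCdef, if_pos hs2, if_pos h0]
    rw [hA3 r (2 * s) t (by linarith), mul_zero]
  · -- 1 - ε/2 ≤ s
    intro r s t hs
    have hs2 : ¬ (s ≤ 1 / 2) := by push_neg; linarith
    have h1 : ¬ ((1 : ℝ) ≤ 1 / 2) := by norm_num
    simp only [hCdef, if_neg hs2, if_neg h1]
    rw [hB4 r (2 * s - 1) t (by linarith)]
    norm_num
  · -- t ≤ ε/2
    intro r s t ht
    by_cases hs : s ≤ 1 / 2
    · simp only [hCdef, if_pos hs]; exact hA5 r (2 * s) t (by linarith)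
    · simp only [hCdef, if_neg hs]; exact hB5 r (2 * s - 1) t (by linarith)
  · -- 1 - ε/2 ≤ t
    intro r s t ht
    by_cases hs : s ≤ 1 / 2
    · simp only [hCdef, if_pos hs]; exact hA6 r (2 * s) t (by linarith)
    · simp only [hCdef, if_neg hs]; exact hB6 r (2 * s - 1) t (by linarith)
  · -- single point at t = 0
    have key : ∀ r s : ℝ, C (r, s, 0) = A (0, 0, 0) := by
      intro r s
      by_cases hs : s ≤ 1 / 2
      · simp only [hCdef, if_pos hs]; exact hA0pt r (2 * s) 0 0
      · simp only [hCdef, if_neg hs]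
        calc B (r, 2 * s - 1, 0) = B (0, 0, 0) := hB0pt r (2 * s - 1) 0 0
          _ = A (0, 1, 0) := (hAB 0 0).symm
          _ = A (0, 0, 0) := hA0pt 0 1 0 0
    intro r s r' s'; rw [key r s, key r' s']
  · -- single point at t = 1
    have key : ∀ r s : ℝ, C (r, s, 1) = A (0, 0, 1) := by
      intro r s
      by_cases hs : s ≤ 1 / 2
      · simp only [hCdef, if_pos hs]; exact hA1pt r (2 * s) 0 0
      · simp only [hCdef, if_neg hs]
        calc B (r, 2 * s - 1, 1) = B (0, 0, 1) := hB1pt r (2 * s - 1) 0 0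
          _ = A (0, 1, 1) := (hAB 0 1).symm
          _ = A (0, 0, 1) := hA1pt 0 1 0 0
    intro r s r' s'; rw [key r s, key r' s']
  · rw [hCres0]; exact hAr10
  · rw [hCres1]; exact hBr11
  · -- C (0, s, t) = vertComp g h (s, t)
    intro s t
    by_cases hs : s ≤ 1 / 2
    · simp only [hCdef, vertComp, if_pos hs]; exact hA0 (2 * s) t
    · simp only [hCdef, vertComp, if_neg hs]; exact hB0 (2 * s - 1) t
  · intro s t
    by_cases hs : s ≤ 1 / 2
    · simp only [hCdef, vertComp, if_pos hs]; exact hA1' (2 * s) t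
    · simp only [hCdef, vertComp, if_neg hs]; exact hB1' (2 * s - 1) t
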